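/- Let A_j be self-adjoint with A_j ≥ α_j I (α_j > 0), η_j ∈ (0,1), τ > 0, S_j = (I + τ²η_j^{-1}A_j)^{-1}, and S = Σ_{j=1}^m η_j S_j with Σ η_j = 1. Then for each j and all f ∈ H: ‖(I - S)^{-1/2}(I - S_j) f‖ ≤ η_j^{-1/2}‖(I - S_j)^{1/2} f‖ ≤ η_j^{-1/2}‖f‖. -/

import Mathlib

open scoped NNReal

set_option synthInstance.maxHeartbeats 1000000
set_option maxHeartbeats 1000000

open ContinuousLinearMap in
private lemma aux_inner_sa {H : Type*} [NormedAddCommGroup H] [InnerProductSpace ℂ H]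
    [CompleteSpace H] {P : H →L[ℂ] H} (hP : IsSelfAdjoint P) (x y : H) :
    (inner ℂ (P x) y : ℂ) = inner ℂ x (P y) := by
  rw [← adjoint_inner_left, hP.adjoint_eq]

open ContinuousLinearMap in
private lemma aux_sum_isPositive {H : Type*} [NormedAddCommGroup H] [InnerProductSpace ℂ H]
    [CompleteSpace H] {ι : Type*} (s : Finset ι) (f : ι → (H →L[ℂ] H))
    (h : ∀ i ∈ s, (f i).IsPositive) : (∑ i ∈ s, f i).IsPositive := by
  classical
  induction s using Finset.induction_on with
  | empty => simpa using isPositive_zero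
  | insert _ _ hx ih =>
      rw [Finset.sum_insert hx]
      exact ((h _ (Finset.mem_insert_self _ _)).add
        (ih fun i hi => h i (Finset.mem_insert_of_mem hi)))

open ContinuousLinearMap in
private lemma aux_re_smul {H : Type*} [NormedAddCommGroup H] [InnerProductSpace ℂ H]
    [CompleteSpace H] (P : H →L[ℂ] H) (r : ℝ) (x y : H) :
    (inner ℂ ((r • P) x) y : ℂ).re = r * (inner ℂ (P x) y : ℂ).re := by
  have h : (r • P) x = (r : ℂ) • P x := by rw [← algebraMap_smul ℂ r P]; rfl
  rw [h, inner_smul_left, Complex.conj_ofReal, Complex.re_ofReal_mul]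

open ContinuousLinearMap in
private lemma aux_smul_isPositive {H : Type*} [NormedAddCommGroup H] [InnerProductSpace ℂ H]
    [CompleteSpace H] {P : H →L[ℂ] H} {r : ℝ} (hr : 0 ≤ r) (hP : P.IsPositive) :
    (r • P).IsPositive := by
  refine ⟨((IsSelfAdjoint.all r).smul hP.isSelfAdjoint).isSymmetric, fun x => ?_⟩
  show (0:ℝ) ≤ RCLike.re (inner ℂ ((r • P) x) x : ℂ)
  rw [RCLike.re_to_complex, aux_re_smul]
  exact mul_nonneg hr (hP.2 x)

private lemma aux_re_symm {H : Type*} [NormedAddCommGroup H] [InnerProductSpace ℂ H]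
    (x y : H) : (inner ℂ x y : ℂ).re = (inner ℂ y x : ℂ).re := by
  rw [← RCLike.re_to_complex, ← RCLike.re_to_complex, inner_re_symm]

private lemma aux_norm_sq_eq {H : Type*} [NormedAddCommGroup H] [InnerProductSpace ℂ H]
    (x : H) : ‖x‖ ^ 2 = (inner ℂ x x : ℂ).re := by
  rw [← RCLike.re_to_complex, inner_self_eq_norm_sq]

open ContinuousLinearMap in
private lemma aux_isPositive_of_re {H : Type*} [NormedAddCommGroup H] [InnerProductSpace ℂ H]
    [CompleteSpace H] {P : H →L[ℂ] H} (hsa : IsSelfAdjoint P)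
    (h : ∀ x, 0 ≤ (inner ℂ (P x) x : ℂ).re) : P.IsPositive := by
  refine ⟨hsa.isSymmetric, fun x => ?_⟩
  show (0:ℝ) ≤ RCLike.re (inner ℂ (P x) x : ℂ)
  rw [RCLike.re_to_complex]
  exact h x

open ContinuousLinearMap in
private lemma aux_isPositive_re {H : Type*} [NormedAddCommGroup H] [InnerProductSpace ℂ H]
    [CompleteSpace H] {P : H →L[ℂ] H} (hP : P.IsPositive) (x : H) :
    0 ≤ (inner ℂ (P x) x : ℂ).re := by
  rw [← RCLike.re_to_complex]
  exact hP.2 x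

open ContinuousLinearMap in
private lemma aux_norm_sqrt_sq {H : Type*} [NormedAddCommGroup H] [InnerProductSpace ℂ H]
    [CompleteSpace H] (B : H →L[ℂ] H) (hB : (0 : H →L[ℂ] H) ≤ B) (x : H) :
    ‖CFC.sqrt B x‖ ^ 2 = (inner ℂ (B x) x : ℂ).re := by
  have hs : (0 : H →L[ℂ] H) ≤ CFC.sqrt B := CFC.sqrt_nonneg _
  have hsa : IsSelfAdjoint (CFC.sqrt B) :=
    ((ContinuousLinearMap.nonneg_iff_isPositive _).mp hs).isSelfAdjoint
  have hmul : CFC.sqrt B * CFC.sqrt B = B := CFC.sqrt_mul_sqrt_self B hB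
  calc ‖CFC.sqrt B x‖ ^ 2 = (inner ℂ (CFC.sqrt B x) (CFC.sqrt B x) : ℂ).re :=
        aux_norm_sq_eq _
    _ = (inner ℂ (CFC.sqrt B (CFC.sqrt B x)) x : ℂ).re := by
        rw [aux_inner_sa hsa, aux_re_symm]
    _ = (inner ℂ (B x) x : ℂ).re := by
        rw [← ContinuousLinearMap.mul_apply, hmul]

open ContinuousLinearMap in
private lemma aux_inv_sa {H : Type*} [NormedAddCommGroup H] [InnerProductSpace ℂ H]
    [CompleteSpace H] {a b : H →L[ℂ] H} (ha : IsSelfAdjoint a)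
    (h1 : b * a = 1) : IsSelfAdjoint b := by
  have h3 : a * star b = 1 := by
    have := congrArg star h1
    simpa [star_mul, ha.star_eq] using this
  exact (left_inv_eq_right_inv h1 h3).symm

open ContinuousLinearMap in
private lemma aux_sqrt_conj_one {H : Type*} [NormedAddCommGroup H] [InnerProductSpace ℂ H]
    [CompleteSpace H] (S T : H →L[ℂ] H) (hT : T * (1 - S) = 1) (hT' : (1 - S) * T = 1)
    (hTnn : (0 : H →L[ℂ] H) ≤ T) :
    CFC.sqrt T * ((1 - S) * CFC.sqrt T) = 1 := by
  set u : (H →L[ℂ] H)ˣ := ⟨T, 1 - S, hT, hT'⟩ with hu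
  have hcomm : Commute (CFC.sqrt T) (1 - S) := by
    have h1 : (1 - S) = ((u⁻¹ : (H →L[ℂ] H)ˣ) : H →L[ℂ] H) := rfl
    have hcid : cfc (fun x : ℝ≥0 => x⁻¹) ((u : H →L[ℂ] H)) = ((u⁻¹ : (H →L[ℂ] H)ˣ) : H →L[ℂ] H) :=
      cfc_inv_id u hTnn
    rw [CFC.sqrt_eq_cfc, h1, ← hcid]
    exact cfc_commute_cfc _ _ T
  rw [← mul_assoc, hcomm.eq, mul_assoc, CFC.sqrt_mul_sqrt_self T hTnn, hT']

set_option synthInstance.maxHeartbeats 1000000 in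
theorem inv_sqrt_one_sub_S_estimate {H : Type*} [NormedAddCommGroup H]
    [InnerProductSpace ℂ H] [CompleteSpace H] (m : ℕ) (hm : 0 < m)
    (Aj : Fin m → (H →L[ℂ] H)) (hAj : ∀ j, IsSelfAdjoint (Aj j))
    (α : Fin m → ℝ) (hα : ∀ j, 0 < α j)
    (hlow : ∀ j, ∀ u : H, α j * ‖u‖ ^ 2 ≤ (inner ℂ (Aj j u) u : ℂ).re)
    (τ : ℝ) (hτ : 0 < τ)
    (η : Fin m → ℝ) (hη : ∀ j, η j ∈ Set.Ioo (0 : ℝ) 1) (hηsum : ∑ j, η j = 1)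
    (Sj : Fin m → (H →L[ℂ] H))
    (hSj : ∀ j, Sj j * (1 + (τ ^ 2 * (η j)⁻¹) • Aj j) = 1)
    (hSj' : ∀ j, (1 + (τ ^ 2 * (η j)⁻¹) • Aj j) * Sj j = 1)
    (S : H →L[ℂ] H) (hS : S = ∑ j, η j • Sj j)
    (T : H →L[ℂ] H) (hT : T * (1 - S) = 1) (hT' : (1 - S) * T = 1) :
    ∀ j, ∀ f : H,
      ‖CFC.sqrt T ((1 - Sj j) f)‖ ≤ (Real.sqrt (η j))⁻¹ * ‖CFC.sqrt (1 - Sj j) f‖ ∧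
      (Real.sqrt (η j))⁻¹ * ‖CFC.sqrt (1 - Sj j) f‖ ≤ (Real.sqrt (η j))⁻¹ * ‖f‖ := by
  classical
  -- basic facts about each `Sj i`
  have hXsa : ∀ i, IsSelfAdjoint ((τ ^ 2 * (η i)⁻¹) • Aj i) := fun i =>
    (IsSelfAdjoint.all _).smul (hAj i)
  have hXre : ∀ i, ∀ u : H, 0 ≤ (inner ℂ (((τ ^ 2 * (η i)⁻¹) • Aj i) u) u : ℂ).re := by
    intro i u
    rw [aux_re_smul]
    have h1 : (0:ℝ) ≤ τ ^ 2 * (η i)⁻¹ :=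
      mul_nonneg (sq_nonneg τ) (inv_nonneg.mpr (hη i).1.le)
    have h2 : (0:ℝ) ≤ (inner ℂ (Aj i u) u : ℂ).re :=
      le_trans (mul_nonneg (hα i).le (sq_nonneg _)) (hlow i u)
    exact mul_nonneg h1 h2
  have h1Xsa : ∀ i, IsSelfAdjoint (1 + (τ ^ 2 * (η i)⁻¹) • Aj i) := fun i =>
    (IsSelfAdjoint.one (R := H →L[ℂ] H)).add (hXsa i)
  have hSjsa : ∀ i, IsSelfAdjoint (Sj i) := fun i => aux_inv_sa (h1Xsa i) (hSj i)
  -- apply (1+X) to Sj u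
  have happ : ∀ i, ∀ u : H,
      Sj i u + ((τ ^ 2 * (η i)⁻¹) • Aj i) (Sj i u) = u := by
    intro i u
    have := congrArg (fun P : H →L[ℂ] H => P u) (hSj' i)
    simpa [ContinuousLinearMap.mul_apply, ContinuousLinearMap.add_apply] using this
  have hBpos : ∀ i, (1 - Sj i).IsPositive := by
    intro i
    refine aux_isPositive_of_re ((IsSelfAdjoint.one (R := H →L[ℂ] H)).sub (hSjsa i)) fun u => ?_
    set X := (τ ^ 2 * (η i)⁻¹) • Aj i with hX
    set v := Sj i u with hv
    have h1 : (1 - Sj i) u = X v := by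
      have := happ i u
      simp only [ContinuousLinearMap.sub_apply, ContinuousLinearMap.one_apply, ← hv]
      exact sub_eq_of_eq_add' this.symm
    rw [h1]
    have h2 : u = v + X v := (happ i u).symm
    rw [h2, inner_add_right]
    have : (inner ℂ (X v) v + inner ℂ (X v) (X v) : ℂ).re
        = (inner ℂ (X v) v : ℂ).re + (inner ℂ (X v) (X v) : ℂ).re := by
      simp [Complex.add_re]
    rw [this]
    have h3 : (0:ℝ) ≤ (inner ℂ (X v) (X v) : ℂ).re := by
      rw [← aux_norm_sq_eq]; positivity
    exact add_nonneg (hXre i v) h3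
  have hSjpos : ∀ i, (Sj i).IsPositive := by
    intro i
    refine aux_isPositive_of_re (hSjsa i) fun u => ?_
    set X := (τ ^ 2 * (η i)⁻¹) • Aj i with hX
    set v := Sj i u with hv
    have h2 : u = v + X v := (happ i u).symm
    show (0:ℝ) ≤ (inner ℂ v u : ℂ).re
    rw [h2, inner_add_right]
    have : (inner ℂ v v + inner ℂ v (X v) : ℂ).re
        = (inner ℂ v v : ℂ).re + (inner ℂ v (X v) : ℂ).re := by simp [Complex.add_re]
    rw [this]
    have h3 : (0:ℝ) ≤ (inner ℂ v v : ℂ).re := by rw [← aux_norm_sq_eq]; positivity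
    have h4 : (0:ℝ) ≤ (inner ℂ v (X v) : ℂ).re := by rw [aux_re_symm]; exact hXre i v
    exact add_nonneg h3 h4
  -- the operator 1 - S
  have hC : 1 - S = ∑ i, η i • (1 - Sj i) := by
    rw [hS]
    have : ∑ i, η i • (1 - Sj i)
        = (∑ i, η i • (1 : H →L[ℂ] H)) - ∑ i, η i • Sj i := by
      simp [smul_sub, Finset.sum_sub_distrib]
    rw [this, ← Finset.sum_smul, hηsum, one_smul]
  have hCpos : (1 - S).IsPositive := by
    rw [hC]
    exact aux_sum_isPositive _ _ fun i _ => aux_smul_isPositive (hη i).1.le (hBpos i)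
  have hTsa : IsSelfAdjoint T := aux_inv_sa hCpos.isSelfAdjoint hT
  have hTpos : T.IsPositive := by
    refine aux_isPositive_of_re hTsa fun u => ?_
    have h2 : (1 - S) (T u) = u := by
      have := congrArg (fun P : H →L[ℂ] H => P u) (hT')
      simpa [ContinuousLinearMap.mul_apply] using this
    calc (0:ℝ) ≤ (inner ℂ ((1 - S) (T u)) (T u) : ℂ).re := aux_isPositive_re hCpos _
      _ = (inner ℂ (T u) u : ℂ).re := by rw [h2, aux_re_symm]
  have hTnn : (0 : H →L[ℂ] H) ≤ T := (ContinuousLinearMap.nonneg_iff_isPositive _).mpr hTpos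
  have hone := aux_sqrt_conj_one S T hT hT' hTnn
  have hsTsa : IsSelfAdjoint (CFC.sqrt T) :=
    ((ContinuousLinearMap.nonneg_iff_isPositive _).mp (CFC.sqrt_nonneg _)).isSelfAdjoint
  intro j f
  have hηj : 0 < η j := (hη j).1
  have hsqη : 0 < Real.sqrt (η j) := Real.sqrt_pos.mpr hηj
  have hBnn : (0 : H →L[ℂ] H) ≤ 1 - Sj j :=
    (ContinuousLinearMap.nonneg_iff_isPositive _).mpr (hBpos j)
  have hsBsa : IsSelfAdjoint (CFC.sqrt (1 - Sj j)) :=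
    ((ContinuousLinearMap.nonneg_iff_isPositive _).mp (CFC.sqrt_nonneg _)).isSelfAdjoint
  -- difference positivity : (1 - S) - η j • (1 - Sj j) ≥ 0
  have hdiff : ((1 - S) - η j • (1 - Sj j)).IsPositive := by
    have heq : (1 - S) - η j • (1 - Sj j)
        = ∑ i ∈ Finset.univ.erase j, η i • (1 - Sj i) := by
      rw [hC, ← Finset.sum_erase_add _ _ (Finset.mem_univ j)]
      abel
    rw [heq]
    exact aux_sum_isPositive _ _ fun i _ => aux_smul_isPositive (hη i).1.le (hBpos i)
  constructor
  · -- main estimate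
    set g : H := (1 - Sj j) f with hg
    set u : H := CFC.sqrt T g with hu
    set y : H := CFC.sqrt T u with hy
    -- step: ‖sqrt B y‖² ≤ (η j)⁻¹ ‖u‖²
    have hCy : (inner ℂ ((1 - S) y) y : ℂ).re = ‖u‖ ^ 2 := by
      have h1 : (inner ℂ ((1 - S) y) y : ℂ) = inner ℂ (CFC.sqrt T ((1 - S) y)) u := by
        rw [hy, ← aux_inner_sa hsTsa]
      have h2 : CFC.sqrt T ((1 - S) y) = u := by
        have := congrArg (fun P : H →L[ℂ] H => P u) hone
        simpa [ContinuousLinearMap.mul_apply, hy] using this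
      rw [h1, h2, ← aux_norm_sq_eq]
    have hstep : ‖CFC.sqrt (1 - Sj j) y‖ ^ 2 ≤ (η j)⁻¹ * ‖u‖ ^ 2 := by
      rw [aux_norm_sqrt_sq _ hBnn]
      have h0 := aux_isPositive_re hdiff y
      have h1 : (inner ℂ (((1 - S) - η j • (1 - Sj j)) y) y : ℂ).re
          = (inner ℂ ((1 - S) y) y : ℂ).re - η j * (inner ℂ ((1 - Sj j) y) y : ℂ).re := by
        rw [ContinuousLinearMap.sub_apply, inner_sub_left, Complex.sub_re, aux_re_smul]
      rw [h1, hCy, sub_nonneg] at h0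
      calc (inner ℂ ((1 - Sj j) y) y : ℂ).re
          = (η j)⁻¹ * (η j * (inner ℂ ((1 - Sj j) y) y : ℂ).re) := by
            field_simp
        _ ≤ (η j)⁻¹ * ‖u‖ ^ 2 := mul_le_mul_of_nonneg_left h0 (inv_nonneg.mpr hηj.le)
    have hstep' : ‖CFC.sqrt (1 - Sj j) y‖ ≤ (Real.sqrt (η j))⁻¹ * ‖u‖ := by
      have hrhs : ((Real.sqrt (η j))⁻¹ * ‖u‖) ^ 2 = (η j)⁻¹ * ‖u‖ ^ 2 := by
        rw [mul_pow, ← Real.sqrt_inv, Real.sq_sqrt (inv_nonneg.mpr hηj.le)]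
      refine le_of_pow_le_pow_left₀ two_ne_zero
        (mul_nonneg (inv_nonneg.mpr hsqη.le) (norm_nonneg _)) ?_
      rw [hrhs]; exact hstep
    -- step: ‖u‖² ≤ ‖sqrt B f‖ * ‖sqrt B y‖
    have hmain : ‖u‖ ^ 2 ≤ ‖CFC.sqrt (1 - Sj j) f‖ * ‖CFC.sqrt (1 - Sj j) y‖ := by
      have h1 : ‖u‖ ^ 2 = (inner ℂ (CFC.sqrt (1 - Sj j) f) (CFC.sqrt (1 - Sj j) y) : ℂ).re := by
        have e1 : (inner ℂ u u : ℂ) = inner ℂ g y := by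
          rw [hu, aux_inner_sa hsTsa, ← hy]
        have hBmul : CFC.sqrt (1 - Sj j) * CFC.sqrt (1 - Sj j) = 1 - Sj j :=
          CFC.sqrt_mul_sqrt_self _ hBnn
        have e2 : (inner ℂ (CFC.sqrt (1 - Sj j) f) (CFC.sqrt (1 - Sj j) y) : ℂ) = inner ℂ g y := by
          rw [aux_inner_sa hsBsa, ← ContinuousLinearMap.mul_apply, hBmul,
            ← aux_inner_sa (hBpos j).isSelfAdjoint, ← hg]
        rw [aux_norm_sq_eq, e1, ← e2]
      calc ‖u‖ ^ 2 = (inner ℂ (CFC.sqrt (1 - Sj j) f) (CFC.sqrt (1 - Sj j) y) : ℂ).re := h1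
        _ ≤ ‖(inner ℂ (CFC.sqrt (1 - Sj j) f) (CFC.sqrt (1 - Sj j) y) : ℂ)‖ :=
            Complex.re_le_norm _
        _ ≤ ‖CFC.sqrt (1 - Sj j) f‖ * ‖CFC.sqrt (1 - Sj j) y‖ := norm_inner_le_norm _ _
    -- combine
    rcases eq_or_lt_of_le (norm_nonneg u) with h0 | h0
    · rw [← h0]
      positivity
    · have : ‖u‖ * ‖u‖ ≤ ((Real.sqrt (η j))⁻¹ * ‖CFC.sqrt (1 - Sj j) f‖) * ‖u‖ := by
        calc ‖u‖ * ‖u‖ = ‖u‖ ^ 2 := (sq ‖u‖).symm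
          _ ≤ ‖CFC.sqrt (1 - Sj j) f‖ * ‖CFC.sqrt (1 - Sj j) y‖ := hmain
          _ ≤ ‖CFC.sqrt (1 - Sj j) f‖ * ((Real.sqrt (η j))⁻¹ * ‖u‖) :=
              mul_le_mul_of_nonneg_left hstep' (norm_nonneg _)
          _ = ((Real.sqrt (η j))⁻¹ * ‖CFC.sqrt (1 - Sj j) f‖) * ‖u‖ := by ring
      exact le_of_mul_le_mul_right this h0
  · -- second estimate
    have h1 : ‖CFC.sqrt (1 - Sj j) f‖ ^ 2 ≤ ‖f‖ ^ 2 := by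
      rw [aux_norm_sqrt_sq _ hBnn]
      have h2 : (inner ℂ ((1 - Sj j) f) f : ℂ).re = ‖f‖ ^ 2 - (inner ℂ (Sj j f) f : ℂ).re := by
        rw [ContinuousLinearMap.sub_apply, ContinuousLinearMap.one_apply, inner_sub_left,
          Complex.sub_re, aux_norm_sq_eq]
      rw [h2]
      have := aux_isPositive_re (hSjpos j) f
      linarith
    have h3 : ‖CFC.sqrt (1 - Sj j) f‖ ≤ ‖f‖ :=
      le_of_pow_le_pow_left₀ two_ne_zero (norm_nonneg _) h1
    exact mul_le_mul_of_nonneg_left h3 (inv_nonneg.mpr hsqη.le)
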